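/- Let M, N be n×n matrices over a commutative ring R. Then det(M+N) = Σ_{r=0}^{n} Σ_{α,β ∈ Ξ_r} (−1)^{s(α)+s(β)} det M_α^β · det N_{ᾱ}^{β̄}, where Ξ_r is the set of strictly increasing sequences of length r from {1,...,n}, s(α) is the sum of the entries of α, M_α^β is obtained from M by deleting the rows indexed by α and columns indexed by β, and N_{ᾱ}^{β̄} is obtained from N by keeping only the rows indexed by α and columns indexed by β. -/

import Mathlib

open Finset Matrix Equiv

variable {n k m : ℕ}

/-- complement cardinality -/
lemma ccompl (hk : k + m = n) {γ : Finset (Fin n)} (hγ : γ.card = k) : γᶜ.card = m := by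
  have := Finset.card_add_card_compl γ
  rw [Fintype.card_fin, hγ] at this
  omega

/-- down-closed finsets of `Fin n` are initial segments -/
lemma downclosed_mem_iff {γ : Finset (Fin n)}
    (hcl : ∀ a ∈ γ, ∀ b : Fin n, b ≤ a → b ∈ γ) (x : Fin n) : x ∈ γ ↔ (x : ℕ) < γ.card := by
  constructor
  · intro hx
    have h1 : Finset.Iic x ⊆ γ := fun y hy => hcl x hx y (Finset.mem_Iic.mp hy)
    have h2 := Finset.card_le_card h1
    rw [Fin.card_Iic] at h2
    omega
  · intro hx
    by_contra hxn
    have hsub : γ ⊆ Finset.Iio x := by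
      intro y hy
      rw [Finset.mem_Iio]
      by_contra hyx
      exact hxn (hcl y hy x (le_of_not_gt hyx))
    have := Finset.card_le_card hsub
    rw [Fin.card_Iio] at this
    omega

/-- predecessor-closed implies down-closed -/
lemma predclosed_downclosed {γ : Finset (Fin n)}
    (h2 : ∀ a ∈ γ, ∀ h : (a : ℕ) ≠ 0, (⟨(a : ℕ) - 1, by omega⟩ : Fin n) ∈ γ) :
    ∀ a ∈ γ, ∀ b : Fin n, b ≤ a → b ∈ γ := by
  have key : ∀ d : ℕ, ∀ a ∈ γ, ∀ b : Fin n, (b : ℕ) + d = (a : ℕ) → b ∈ γ := by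
    intro d
    induction d with
    | zero => intro a ha b hb; have : b = a := Fin.ext (by omega); rwa [this]
    | succ d ih =>
      intro a ha b hb
      have hane : (a : ℕ) ≠ 0 := by omega
      have ha' := h2 a ha hane
      exact ih _ ha' b (by simp; omega)
  intro a ha b hb
  exact key ((a : ℕ) - (b : ℕ)) a ha b (by have := (Fin.le_def).mp hb; omega)

/-- the row selector: position `i` gets the `i`-th element of `γ ⊔ γᶜ` listed in order -/
def elimEmb (hk : k + m = n) (γ : Finset (Fin n)) (hγ : γ.card = k) : Fin n → Fin n :=
  fun i => Sum.elim (fun a => γ.orderEmbOfFin hγ a) (fun b => γᶜ.orderEmbOfFin (ccompl hk hγ) b)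
    (finSumFinEquiv.symm (Fin.cast hk.symm i))

lemma elimEmb_injective (hk : k + m = n) (γ : Finset (Fin n)) (hγ : γ.card = k) :
    Function.Injective (elimEmb hk γ hγ) := by
  intro i j hij
  unfold elimEmb at hij
  have : finSumFinEquiv.symm (Fin.cast hk.symm i) = finSumFinEquiv.symm (Fin.cast hk.symm j) := by
    rcases h1 : finSumFinEquiv.symm (Fin.cast hk.symm i) with a | a <;>
      rcases h2 : finSumFinEquiv.symm (Fin.cast hk.symm j) with b | b <;>
        rw [h1, h2] at hij <;> simp only [Sum.elim_inl, Sum.elim_inr] at hij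
    · simp [(γ.orderEmbOfFin hγ).injective hij]
    · have m1 := Finset.orderEmbOfFin_mem γ hγ a
      have m2 := Finset.orderEmbOfFin_mem γᶜ (ccompl hk hγ) b
      rw [hij] at m1; rw [Finset.mem_compl] at m2; exact absurd m1 m2
    · have m1 := Finset.orderEmbOfFin_mem γ hγ b
      have m2 := Finset.orderEmbOfFin_mem γᶜ (ccompl hk hγ) a
      rw [← hij] at m1; rw [Finset.mem_compl] at m2; exact absurd m1 m2
    · simp [(γᶜ.orderEmbOfFin (ccompl hk hγ)).injective hij]
  have h4 := finSumFinEquiv.symm.injective this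
  have h5 : Fin.cast hk.symm i = Fin.cast hk.symm j := h4
  exact Fin.ext (by simpa [Fin.ext_iff] using h5)

lemma elimEmb_of_initial (hk : k + m = n) (γ : Finset (Fin n)) (hγ : γ.card = k)
    (hcl : ∀ a ∈ γ, ∀ b : Fin n, b ≤ a → b ∈ γ) : elimEmb hk γ hγ = id := by
  have hmem : ∀ x : Fin n, x ∈ γ ↔ (x : ℕ) < k := by
    intro x; rw [downclosed_mem_iff hcl, hγ]
  have h1 : ∀ a : Fin k, γ.orderEmbOfFin hγ a = (⟨(a : ℕ), by omega⟩ : Fin n) := by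
    have := Finset.orderEmbOfFin_unique hγ (f := fun a : Fin k => (⟨(a : ℕ), by omega⟩ : Fin n))
      (fun x => (hmem _).mpr (by simp)) (fun a b hab => by
        simp only [Fin.mk_lt_mk]; exact Fin.lt_def.mp hab)
    exact fun a => (congrFun this a).symm
  have h2 : ∀ b : Fin m, γᶜ.orderEmbOfFin (ccompl hk hγ) b = (⟨k + (b : ℕ), by omega⟩ : Fin n) := by
    have := Finset.orderEmbOfFin_unique (ccompl hk hγ)
      (f := fun b : Fin m => (⟨k + (b : ℕ), by omega⟩ : Fin n))
      (fun x => by rw [Finset.mem_compl, hmem]; simp)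
      (fun a b hab => by
        simp only [Fin.mk_lt_mk]; have := Fin.lt_def.mp hab; omega)
    exact fun a => (congrFun this a).symm
  funext i
  unfold elimEmb
  rcases h : finSumFinEquiv.symm (Fin.cast hk.symm i) with a | a
  · have : Fin.cast hk.symm i = finSumFinEquiv (Sum.inl a) := by
      rw [← h]; simp
    simp only [Sum.elim_inl, h1, id_eq]
    rw [finSumFinEquiv_apply_left] at this
    exact Fin.ext (by simpa [Fin.ext_iff] using this.symm)
  · have : Fin.cast hk.symm i = finSumFinEquiv (Sum.inr a) := by
      rw [← h]; simp
    simp only [Sum.elim_inr, h2, id_eq]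
    rw [finSumFinEquiv_apply_right] at this
    exact Fin.ext (by simpa [Fin.ext_iff] using this.symm)

lemma sum_of_initial (γ : Finset (Fin n))
    (hcl : ∀ a ∈ γ, ∀ b : Fin n, b ≤ a → b ∈ γ) :
    ∑ b ∈ γ, (b : ℕ) = ∑ j ∈ Finset.range γ.card, j := by
  have hmem : ∀ x : Fin n, x ∈ γ ↔ (x : ℕ) < γ.card := downclosed_mem_iff hcl
  have hle : γ.card ≤ n := by simpa using Finset.card_le_card (Finset.subset_univ γ)
  refine Finset.sum_bij (fun (x : Fin n) (_ : x ∈ γ) => (x : ℕ)) ?_ ?_ ?_ ?_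
  · intro a ha; exact Finset.mem_range.mpr ((hmem a).mp ha)
  · intro a _ b _ hab; exact Fin.ext hab
  · intro b hb
    rw [Finset.mem_range] at hb
    exact ⟨⟨b, by omega⟩, (hmem _).mpr hb, rfl⟩
  · intro a _; rfl

lemma swap_lt_swap {b c : Fin n} (hbc : (b : ℕ) + 1 = (c : ℕ)) {s : Finset (Fin n)}
    (hone : b ∈ s ↔ c ∉ s) {p q : Fin n} (hp : p ∈ s) (hq : q ∈ s) (hpq : p < q) :
    Equiv.swap b c p < Equiv.swap b c q := by
  have hbc' : b < c := Fin.lt_def.mpr (by omega)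
  have hpq' := Fin.lt_def.mp hpq
  rcases eq_or_ne b p with rfl | hpb
  · have hcs : c ∉ s := hone.mp hp
    have hqc : q ≠ c := fun h => hcs (h ▸ hq)
    have hqb : q ≠ b := ne_of_gt hpq
    rw [Equiv.swap_apply_left, Equiv.swap_apply_of_ne_of_ne hqb hqc]
    have h1 : (q : ℕ) ≠ (c : ℕ) := fun h => hqc (Fin.ext h)
    exact Fin.lt_def.mpr (by omega)
  · rcases eq_or_ne c p with rfl | hpc
    · have hbs : b ∉ s := fun h => (hone.mp h) hp
      have hqb : q ≠ b := fun h => hbs (h ▸ hq)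
      have hqc : q ≠ c := ne_of_gt hpq
      rw [Equiv.swap_apply_right, Equiv.swap_apply_of_ne_of_ne hqb hqc]
      exact lt_trans hbc' hpq
    · rw [Equiv.swap_apply_of_ne_of_ne hpb.symm hpc.symm]
      rcases eq_or_ne b q with rfl | hqb
      · rw [Equiv.swap_apply_left]
        exact lt_trans hpq hbc'
      · rcases eq_or_ne c q with rfl | hqc
        · rw [Equiv.swap_apply_right]
          have h1 : (p : ℕ) ≠ (b : ℕ) := fun h => hpb (Fin.ext h.symm)
          exact Fin.lt_def.mpr (by omega)
        · rw [Equiv.swap_apply_of_ne_of_ne hqb.symm hqc.symm]; exact hpq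

lemma step_card {γ : Finset (Fin n)} (hγ : γ.card = k) {b c : Fin n}
    (hc : c ∈ γ) (hb : b ∉ γ) : (insert b (γ.erase c)).card = k := by
  rw [Finset.card_insert_of_notMem (fun h => hb (Finset.mem_of_mem_erase h)),
    Finset.card_erase_of_mem hc, hγ]
  have : 1 ≤ k := by rw [← hγ]; exact Finset.card_pos.mpr ⟨c, hc⟩
  omega

lemma step_sum {γ : Finset (Fin n)} {b c : Fin n} (hbc : (b : ℕ) + 1 = (c : ℕ))
    (hc : c ∈ γ) (hb : b ∉ γ) :
    (∑ x ∈ insert b (γ.erase c), (x : ℕ)) + 1 = ∑ x ∈ γ, (x : ℕ) := by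
  rw [Finset.sum_insert (fun h => hb (Finset.mem_of_mem_erase h)),
    ← Finset.add_sum_erase γ _ hc]
  omega

lemma step_emb {γ : Finset (Fin n)} (hγ : γ.card = k) {b c : Fin n}
    (hbc : (b : ℕ) + 1 = (c : ℕ)) (hc : c ∈ γ) (hb : b ∉ γ) : ∀ x : Fin k,
    γ.orderEmbOfFin hγ x = Equiv.swap b c ((insert b (γ.erase c)).orderEmbOfFin (step_card hγ hc hb) x) := by
  have hbc' : b ≠ c := fun h => by rw [h] at hbc; omega
  have key := Finset.orderEmbOfFin_unique hγ
    (f := fun x => Equiv.swap b c ((insert b (γ.erase c)).orderEmbOfFin (step_card hγ hc hb) x))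
    (fun x => by
      have hx := Finset.orderEmbOfFin_mem (insert b (γ.erase c)) (step_card hγ hc hb) x
      rcases Finset.mem_insert.mp hx with h | h
      · rw [h, Equiv.swap_apply_left]; exact hc
      · have h1 : (insert b (γ.erase c)).orderEmbOfFin (step_card hγ hc hb) x ≠ c :=
          Finset.ne_of_mem_erase h
        have h2 : (insert b (γ.erase c)).orderEmbOfFin (step_card hγ hc hb) x ≠ b :=
          fun hh => hb (hh ▸ Finset.mem_of_mem_erase h)
        rw [Equiv.swap_apply_of_ne_of_ne h2 h1]
        exact Finset.mem_of_mem_erase h)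
    (fun p q hpq => by
      refine swap_lt_swap hbc ?_ (Finset.orderEmbOfFin_mem _ _ p)
        (Finset.orderEmbOfFin_mem _ _ q) ((Finset.orderEmbOfFin _ _).strictMono hpq)
      constructor
      · intro _ hcc
        rcases Finset.mem_insert.mp hcc with h | h
        · exact hbc' h.symm
        · exact Finset.ne_of_mem_erase h rfl
      · intro _; exact Finset.mem_insert_self _ _)
  exact fun x => (congrFun key x).symm

lemma step_emb_compl (hk : k + m = n) {γ : Finset (Fin n)} (hγ : γ.card = k) {b c : Fin n}
    (hbc : (b : ℕ) + 1 = (c : ℕ)) (hc : c ∈ γ) (hb : b ∉ γ) : ∀ x : Fin m,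
    γᶜ.orderEmbOfFin (ccompl hk hγ) x =
      Equiv.swap b c ((insert b (γ.erase c))ᶜ.orderEmbOfFin (ccompl hk (step_card hγ hc hb)) x) := by
  have hbc' : b ≠ c := fun h => by rw [h] at hbc; omega
  have hbin : b ∈ insert b (γ.erase c) := Finset.mem_insert_self _ _
  have hcnotin : c ∉ insert b (γ.erase c) := by
    intro hcc
    rcases Finset.mem_insert.mp hcc with h | h
    · exact hbc' h.symm
    · exact Finset.ne_of_mem_erase h rfl
  have key := Finset.orderEmbOfFin_unique (ccompl hk hγ)
    (f := fun x => Equiv.swap b c ((insert b (γ.erase c))ᶜ.orderEmbOfFin (ccompl hk (step_card hγ hc hb)) x))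
    (fun x => by
      have hx := Finset.orderEmbOfFin_mem (insert b (γ.erase c))ᶜ (ccompl hk (step_card hγ hc hb)) x
      rw [Finset.mem_compl] at hx
      rcases eq_or_ne ((insert b (γ.erase c))ᶜ.orderEmbOfFin (ccompl hk (step_card hγ hc hb)) x) c with h | h
      · rw [h, Equiv.swap_apply_right]; exact Finset.mem_compl.mpr hb
      · have h2 : ((insert b (γ.erase c))ᶜ.orderEmbOfFin (ccompl hk (step_card hγ hc hb)) x) ≠ b :=
          fun hh => hx (by rw [hh]; exact hbin)
        rw [Equiv.swap_apply_of_ne_of_ne h2 h]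
        rw [Finset.mem_compl]
        intro hmem
        exact hx (Finset.mem_insert_of_mem (Finset.mem_erase.mpr ⟨h, hmem⟩)))
    (fun p q hpq => by
      refine swap_lt_swap hbc ?_ (Finset.orderEmbOfFin_mem _ _ p)
        (Finset.orderEmbOfFin_mem _ _ q) ((Finset.orderEmbOfFin _ _).strictMono hpq)
      constructor
      · intro h
        exact absurd (Finset.mem_compl.mp h) (not_not.mpr hbin)
      · intro h
        exact absurd h (not_not.mpr (Finset.mem_compl.mpr hcnotin)))
  exact fun x => (congrFun key x).symm

lemma step_elimEmb (hk : k + m = n) {γ : Finset (Fin n)} (hγ : γ.card = k) {b c : Fin n}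
    (hbc : (b : ℕ) + 1 = (c : ℕ)) (hc : c ∈ γ) (hb : b ∉ γ) :
    elimEmb hk γ hγ = fun i => Equiv.swap b c
      (elimEmb hk (insert b (γ.erase c)) (step_card hγ hc hb) i) := by
  funext i
  unfold elimEmb
  rcases finSumFinEquiv.symm (Fin.cast hk.symm i) with a | a
  · exact step_emb hγ hbc hc hb a
  · exact step_emb_compl hk hγ hbc hc hb a

variable {R : Type} [CommRing R]

/-- The 0-1 matrix whose row `i` is the standard basis vector at `elimEmb hk γ hγ i`. -/
def uMat (R : Type) [CommRing R] (hk : k + m = n) (γ : Finset (Fin n)) (hγ : γ.card = k) :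
    Matrix (Fin n) (Fin n) R :=
  Matrix.of fun i j => if j = elimEmb hk γ hγ i then 1 else 0

lemma uMat_det_aux (Nb : ℕ) : ∀ (hk : k + m = n) (γ : Finset (Fin n)) (hγ : γ.card = k),
    (∑ x ∈ γ, (x : ℕ)) ≤ Nb →
    (uMat R hk γ hγ).det = (-1 : R) ^ ((∑ x ∈ γ, (x : ℕ)) + ∑ j ∈ Finset.range k, j) := by
  induction Nb with
  | zero =>
    intro hk γ hγ hN
    have hnoc : ∀ c ∈ γ, (c : ℕ) = 0 := by
      intro c hc
      have h2 : (c : ℕ) ≤ ∑ x ∈ γ, (x : ℕ) := by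
        simpa using Finset.single_le_sum (f := fun x : Fin n => (x : ℕ))
          (fun _ _ => Nat.zero_le _) hc
      omega
    have hcl := predclosed_downclosed (γ := γ) (fun a ha h => absurd (hnoc a ha) h)
    rw [show (uMat R hk γ hγ) = 1 from ?_, Matrix.det_one,
      show (∑ x ∈ γ, (x : ℕ)) = ∑ j ∈ Finset.range k, j from by
        rw [sum_of_initial γ hcl, hγ]]
    · exact (Even.neg_one_pow ⟨_, rfl⟩).symm
    · funext i j
      rw [uMat, Matrix.of_apply, elimEmb_of_initial hk γ hγ hcl]
      simp [Matrix.one_apply, eq_comm]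
  | succ Nb ih =>
    intro hk γ hγ hN
    by_cases hex : ∃ c ∈ γ, (c : ℕ) ≠ 0 ∧ (⟨(c : ℕ) - 1, by omega⟩ : Fin n) ∉ γ
    · obtain ⟨c, hc, hc0, hb⟩ := hex
      set b : Fin n := ⟨(c : ℕ) - 1, by omega⟩ with hbdef
      have hbc : (b : ℕ) + 1 = (c : ℕ) := by simp [hbdef]; omega
      have hrel : uMat R hk γ hγ =
          (uMat R hk (insert b (γ.erase c)) (step_card hγ hc hb)).submatrix id (Equiv.swap b c) := by
        funext i j
        simp only [uMat, Matrix.of_apply, Matrix.submatrix_apply, id_eq]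
        rw [step_elimEmb hk hγ hbc hc hb]
        congr 1
        simp only [eq_iff_iff]
        constructor
        · intro h; rw [h, Equiv.swap_apply_self]
        · intro h; rw [← h, Equiv.swap_apply_self]
      have hsum := step_sum hbc hc hb
      have hIH := ih hk (insert b (γ.erase c)) (step_card hγ hc hb) (by omega)
      rw [hrel, Matrix.det_permute', hIH]
      have hsign : Equiv.Perm.sign (Equiv.swap b c) = -1 :=
        Equiv.Perm.sign_swap (fun h => by rw [h] at hbc; omega)
      rw [hsign]
      push_cast
      rw [show (∑ x ∈ γ, (x : ℕ)) + ∑ j ∈ Finset.range k, j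
            = ((∑ x ∈ insert b (γ.erase c), (x : ℕ)) + ∑ j ∈ Finset.range k, j) + 1 from by omega]
      ring
    · push_neg at hex
      have hcl := predclosed_downclosed (γ := γ) (fun a ha h => by
        by_contra hcon
        exact hcon (hex a ha h) |>.elim)
      rw [show (uMat R hk γ hγ) = 1 from ?_, Matrix.det_one,
        show (∑ x ∈ γ, (x : ℕ)) = ∑ j ∈ Finset.range k, j from by
          rw [sum_of_initial γ hcl, hγ]]
      · exact (Even.neg_one_pow ⟨_, rfl⟩).symm
      · funext i j
        rw [uMat, Matrix.of_apply, elimEmb_of_initial hk γ hγ hcl]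
        simp [Matrix.one_apply, eq_comm]

lemma uMat_det (hk : k + m = n) (γ : Finset (Fin n)) (hγ : γ.card = k) :
    (uMat R hk γ hγ).det = (-1 : R) ^ ((∑ x ∈ γ, (x : ℕ)) + ∑ j ∈ Finset.range k, j) :=
  uMat_det_aux _ hk γ hγ le_rfl

lemma det_single_perm {K : ℕ} (s : Finset (Fin n)) (hs : s.card = K) (u : Fin K → Fin n)
    (σ : Equiv.Perm (Fin K)) (key : ∀ i, s.orderEmbOfFin hs (σ i) = u i) :
    Matrix.det (Matrix.of fun i j : Fin K => (Pi.single (u i) (1 : R) : Fin n → R) (s.orderEmbOfFin hs j)) =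
      ((Equiv.Perm.sign σ : ℤ) : R) := by
  have hmat : (Matrix.of fun i j : Fin K => (Pi.single (u i) (1 : R) : Fin n → R) (s.orderEmbOfFin hs j)) =
      (1 : Matrix (Fin K) (Fin K) R).submatrix σ id := by
    funext i j
    rw [Matrix.of_apply, Matrix.submatrix_apply, id_eq, ← key i, Pi.single_apply,
      Matrix.one_apply]
    exact if_congr (by rw [(s.orderEmbOfFin hs).injective.eq_iff, eq_comm]) rfl rfl
  rw [hmat, Matrix.det_permute, Matrix.det_one, mul_one]

lemma lap_units (hk : k + m = n) (v : Fin k ⊕ Fin m → Fin n) :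
    Matrix.det (Matrix.of fun i j : Fin n =>
        Pi.single (v (finSumFinEquiv.symm (Fin.cast hk.symm i))) (1 : R) j) =
      ∑ β : Finset (Fin n), (if h : β.card = k then
        ((-1 : R) ^ ((∑ x ∈ β, (x : ℕ)) + ∑ j ∈ Finset.range k, j)) *
          Matrix.det (Matrix.of fun i j : Fin k =>
            (Pi.single (v (Sum.inl i)) (1 : R) : Fin n → R) (β.orderEmbOfFin h j)) *
          Matrix.det (Matrix.of fun i j : Fin m =>
            (Pi.single (v (Sum.inr i)) (1 : R) : Fin n → R) (βᶜ.orderEmbOfFin (ccompl hk h) j))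
      else 0) := by
  by_cases hv : Function.Injective v
  · -- injective case
    have hinl : Function.Injective fun i : Fin k => v (Sum.inl i) :=
      fun a b hab => Sum.inl_injective (hv hab)
    have hinr : Function.Injective fun i : Fin m => v (Sum.inr i) :=
      fun a b hab => Sum.inr_injective (hv hab)
    set γ : Finset (Fin n) := Finset.image (fun i => v (Sum.inl i)) Finset.univ with hγdef
    have hγ : γ.card = k := by
      rw [hγdef, Finset.card_image_of_injective _ hinl, Finset.card_univ, Fintype.card_fin]
    have hvl : ∀ i, v (Sum.inl i) ∈ γ := fun i => Finset.mem_image_of_mem _ (Finset.mem_univ i)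
    have hvr : ∀ i, v (Sum.inr i) ∈ γᶜ := by
      have hsub : Finset.image (fun i => v (Sum.inr i)) Finset.univ ⊆ γᶜ := by
        intro x hx
        rcases Finset.mem_image.mp hx with ⟨a, _, rfl⟩
        rw [Finset.mem_compl]
        intro hxin
        rcases Finset.mem_image.mp hxin with ⟨b, _, hba⟩
        exact Sum.inl_ne_inr (hv hba)
      exact fun i => hsub (Finset.mem_image_of_mem _ (Finset.mem_univ i))
    -- build the sorting permutations
    have hbij₁ : Function.Bijective (fun i : Fin k =>
        (γ.orderIsoOfFin hγ).symm ⟨v (Sum.inl i), hvl i⟩) := by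
      rw [← Finite.injective_iff_bijective]
      intro a b hab
      have := (γ.orderIsoOfFin hγ).symm.injective hab
      exact hinl (Subtype.ext_iff.mp this)
    have hbij₂ : Function.Bijective (fun i : Fin m =>
        ((γᶜ).orderIsoOfFin (ccompl hk hγ)).symm ⟨v (Sum.inr i), hvr i⟩) := by
      rw [← Finite.injective_iff_bijective]
      intro a b hab
      have := ((γᶜ).orderIsoOfFin (ccompl hk hγ)).symm.injective hab
      exact hinr (Subtype.ext_iff.mp this)
    set σ₁ : Equiv.Perm (Fin k) := Equiv.ofBijective _ hbij₁ with hσ₁def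
    set σ₂ : Equiv.Perm (Fin m) := Equiv.ofBijective _ hbij₂ with hσ₂def
    have key₁ : ∀ i, γ.orderEmbOfFin hγ (σ₁ i) = v (Sum.inl i) := by
      intro i
      rw [← Finset.coe_orderIsoOfFin_apply]
      rw [hσ₁def]
      simp [Equiv.ofBijective_apply]
    have key₂ : ∀ i, (γᶜ).orderEmbOfFin (ccompl hk hγ) (σ₂ i) = v (Sum.inr i) := by
      intro i
      rw [← Finset.coe_orderIsoOfFin_apply]
      rw [hσ₂def]
      simp [Equiv.ofBijective_apply]
    -- RHS collapses to the γ-term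
    rw [Fintype.sum_eq_single γ (fun β hβne => by
      rcases Nat.decEq β.card k with h | h
      · rw [dif_neg h]
      · rw [dif_pos h]
        have hex : ∃ i : Fin k, v (Sum.inl i) ∉ β := by
          by_contra hall
          push_neg at hall
          apply hβne
          refine (Finset.eq_of_subset_of_card_le ?_ (by rw [h, hγ])).symm
          intro x hx
          rw [hγdef] at hx
          rcases Finset.mem_image.mp hx with ⟨a, _, rfl⟩
          exact hall a
        obtain ⟨i, hi⟩ := hex
        have hz : Matrix.det (Matrix.of fun i' j : Fin k =>
            (Pi.single (v (Sum.inl i')) (1 : R) : Fin n → R) (β.orderEmbOfFin h j)) = 0 := by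
          apply Matrix.det_eq_zero_of_row_eq_zero i
          intro j
          rw [Matrix.of_apply, Pi.single_apply, if_neg]
          intro hcon
          rw [← hcon] at hi
          exact hi (Finset.orderEmbOfFin_mem β h j)
        rw [hz]
        ring)]
    rw [dif_pos hγ, det_single_perm γ hγ _ σ₁ key₁, det_single_perm (γᶜ) (ccompl hk hγ) _ σ₂ key₂]
    -- LHS
    have hE : ∀ i : Fin n, v (finSumFinEquiv.symm (Fin.cast hk.symm i)) =
        elimEmb hk γ hγ ((Equiv.permCongr (finSumFinEquiv.trans (finCongr hk))
          (Equiv.sumCongr σ₁ σ₂)) i) := by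
      intro i
      have hcc : ∀ r : Fin k ⊕ Fin m,
          finSumFinEquiv.symm (Fin.cast hk.symm (Fin.cast hk (finSumFinEquiv r))) = r := by
        intro r; simp
      simp only [Equiv.permCongr_apply, Equiv.trans_apply, Equiv.symm_trans_apply,
        finCongr_symm, finCongr_apply]
      unfold elimEmb
      rw [hcc]
      generalize finSumFinEquiv.symm (Fin.cast hk.symm i) = r
      rcases r with a | a
      · simp only [Equiv.sumCongr_apply, Sum.map_inl, Sum.elim_inl]
        exact (key₁ a).symm
      · simp only [Equiv.sumCongr_apply, Sum.map_inr, Sum.elim_inr]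
        exact (key₂ a).symm
    have hmat : (Matrix.of fun i j : Fin n =>
        Pi.single (v (finSumFinEquiv.symm (Fin.cast hk.symm i))) (1 : R) j) =
        (uMat R hk γ hγ).submatrix (Equiv.permCongr (finSumFinEquiv.trans (finCongr hk))
          (Equiv.sumCongr σ₁ σ₂)) id := by
      funext i j
      rw [Matrix.of_apply, Matrix.submatrix_apply, id_eq, hE i]
      rw [uMat, Matrix.of_apply, Pi.single_apply]
    rw [hmat, Matrix.det_permute, uMat_det]
    rw [Equiv.Perm.sign_permCongr, Equiv.Perm.sign_sumCongr]
    push_cast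
    ring
  · -- non-injective case
    rw [Function.not_injective_iff] at hv
    obtain ⟨p, q, hpq, hpqne⟩ := hv
    have lhs0 : Matrix.det (Matrix.of fun i j : Fin n =>
        Pi.single (v (finSumFinEquiv.symm (Fin.cast hk.symm i))) (1 : R) j) = 0 := by
      apply Matrix.det_zero_of_row_eq (i := Fin.cast hk (finSumFinEquiv p))
        (j := Fin.cast hk (finSumFinEquiv q))
      · exact fun hcon => hpqne (finSumFinEquiv.injective (Fin.cast_injective hk hcon))
      · funext j
        have h1 : ∀ r : Fin k ⊕ Fin m,
            finSumFinEquiv.symm (Fin.cast hk.symm (Fin.cast hk (finSumFinEquiv r))) = r := by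
          intro r; simp
        rw [Matrix.of_apply, Matrix.of_apply, h1, h1, hpq]
    rw [lhs0]
    symm
    apply Finset.sum_eq_zero
    intro β _
    rcases Nat.decEq β.card k with h | h
    · rw [dif_neg h]
    · rw [dif_pos h]
      rcases p with p | p <;> rcases q with q | q
      · -- both inl
        have hz : Matrix.det (Matrix.of fun i' j : Fin k =>
            (Pi.single (v (Sum.inl i')) (1 : R) : Fin n → R) (β.orderEmbOfFin h j)) = 0 := by
          apply Matrix.det_zero_of_row_eq (i := p) (j := q)
            (fun hc => hpqne (by rw [hc]))
          funext j
          rw [Matrix.of_apply, Matrix.of_apply, hpq]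
        rw [hz]; ring
      · -- p inl, q inr : cross
        by_cases hc : v (Sum.inl p) ∈ β
        · have hz : Matrix.det (Matrix.of fun i' j : Fin m =>
              (Pi.single (v (Sum.inr i')) (1 : R) : Fin n → R) (βᶜ.orderEmbOfFin (ccompl hk h) j)) = 0 := by
            apply Matrix.det_eq_zero_of_row_eq_zero q
            intro j
            rw [Matrix.of_apply, Pi.single_apply, if_neg]
            intro hcon
            have := Finset.orderEmbOfFin_mem βᶜ (ccompl hk h) j
            rw [hcon, ← hpq] at this
            exact (Finset.mem_compl.mp this) hc
          rw [hz]; ring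
        · have hz : Matrix.det (Matrix.of fun i' j : Fin k =>
              (Pi.single (v (Sum.inl i')) (1 : R) : Fin n → R) (β.orderEmbOfFin h j)) = 0 := by
            apply Matrix.det_eq_zero_of_row_eq_zero p
            intro j
            rw [Matrix.of_apply, Pi.single_apply, if_neg]
            intro hcon
            have := Finset.orderEmbOfFin_mem β h j
            rw [hcon] at this
            exact hc this
          rw [hz]; ring
      · -- p inr, q inl : cross
        by_cases hc : v (Sum.inl q) ∈ β
        · have hz : Matrix.det (Matrix.of fun i' j : Fin m =>
              (Pi.single (v (Sum.inr i')) (1 : R) : Fin n → R) (βᶜ.orderEmbOfFin (ccompl hk h) j)) = 0 := by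
            apply Matrix.det_eq_zero_of_row_eq_zero p
            intro j
            rw [Matrix.of_apply, Pi.single_apply, if_neg]
            intro hcon
            have := Finset.orderEmbOfFin_mem βᶜ (ccompl hk h) j
            rw [hcon, hpq] at this
            exact (Finset.mem_compl.mp this) hc
          rw [hz]; ring
        · have hz : Matrix.det (Matrix.of fun i' j : Fin k =>
              (Pi.single (v (Sum.inl i')) (1 : R) : Fin n → R) (β.orderEmbOfFin h j)) = 0 := by
            apply Matrix.det_eq_zero_of_row_eq_zero q
            intro j
            rw [Matrix.of_apply, Pi.single_apply, if_neg]
            intro hcon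
            have := Finset.orderEmbOfFin_mem β h j
            rw [hcon] at this
            exact hc this
          rw [hz]; ring
      · -- both inr
        have hz : Matrix.det (Matrix.of fun i' j : Fin m =>
            (Pi.single (v (Sum.inr i')) (1 : R) : Fin n → R) (βᶜ.orderEmbOfFin (ccompl hk h) j)) = 0 := by
          apply Matrix.det_zero_of_row_eq (i := p) (j := q)
            (fun hc => hpqne (by rw [hc]))
          funext j
          rw [Matrix.of_apply, Matrix.of_apply, hpq]
        rw [hz]; ring

noncomputable section bundle

variable (R)

/-- determinant as multilinear map in rows indexed by `Fin k ⊕ Fin m` -/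
def Fmap (hk : k + m = n) : MultilinearMap R (fun _ : Fin k ⊕ Fin m => (Fin n → R)) R :=
  (Matrix.detRowAlternating : ((Fin n → R) [⋀^Fin n]→ₗ[R] R)).toMultilinearMap.domDomCongr
    (finSumFinEquiv.trans (finCongr hk)).symm

def Aterm {K : ℕ} (s : Finset (Fin n)) (hs : s.card = K) :
    MultilinearMap R (fun _ : Fin K => (Fin n → R)) R :=
  (Matrix.detRowAlternating : ((Fin K → R) [⋀^Fin K]→ₗ[R] R)).toMultilinearMap.compLinearMap
    (fun _ => LinearMap.funLeft R R (s.orderEmbOfFin hs))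

def Gmap (hk : k + m = n) : MultilinearMap R (fun _ : Fin k ⊕ Fin m => (Fin n → R)) R :=
  ∑ β : Finset (Fin n),
    if h : β.card = k then
      ((-1 : R) ^ ((∑ x ∈ β, (x : ℕ)) + ∑ j ∈ Finset.range k, j)) •
        (LinearMap.mul' R R).compMultilinearMap
          ((Aterm R β h).domCoprod (Aterm R βᶜ (ccompl hk h)))
    else 0

lemma Fmap_apply (hk : k + m = n) (v : (Fin k ⊕ Fin m) → (Fin n → R)) :
    Fmap R hk v = Matrix.det (Matrix.of fun i j : Fin n =>
      v (finSumFinEquiv.symm (Fin.cast hk.symm i)) j) := by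
  rfl

lemma Gmap_apply (hk : k + m = n) (v : (Fin k ⊕ Fin m) → (Fin n → R)) :
    Gmap R hk v = ∑ β : Finset (Fin n),
      (if h : β.card = k then
        ((-1 : R) ^ ((∑ x ∈ β, (x : ℕ)) + ∑ j ∈ Finset.range k, j)) *
          Matrix.det (Matrix.of fun i j : Fin k => v (Sum.inl i) (β.orderEmbOfFin h j)) *
          Matrix.det (Matrix.of fun i j : Fin m => v (Sum.inr i) (βᶜ.orderEmbOfFin (ccompl hk h) j))
      else 0) := by
  rw [Gmap, MultilinearMap.sum_apply]
  congr 1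
  funext β
  rcases Nat.decEq β.card k with h | h
  · rw [dif_neg h, dif_neg h]; rfl
  · rw [dif_pos h, dif_pos h]
    rw [MultilinearMap.smul_apply, smul_eq_mul, mul_assoc]
    congr 1

lemma lap (hk : k + m = n) : Fmap R hk = Gmap R hk := by
  apply Module.Basis.ext_multilinear (fun _ => Pi.basisFun R (Fin n))
  intro v
  rw [Fmap_apply, Gmap_apply]
  simp only [Pi.basisFun_apply]
  exact lap_units hk v

end bundle

lemma neg_one_pow_combine (e' k' : ℕ) (sa sb : ℕ) :
    ((-1 : R) ^ (sa + e') * (-1 : R) ^ (sb + e')) = (-1 : R) ^ ((sa + k') + (sb + k')) := by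
  have h1 : sa + e' + (sb + e') = (sa + sb) + (e' + e') := by ring
  have h2 : sa + k' + (sb + k') = (sa + sb) + (k' + k') := by ring
  have l : ∀ t u : ℕ, (-1 : R) ^ (t + (u + u)) = (-1 : R) ^ t := fun t u => by
    rw [pow_add, Even.neg_one_pow ⟨u, rfl⟩, mul_one]
  rw [← pow_add, h1, l, h2, l]

/-- Laplace-type expansion of the determinant of a row-mixed matrix. -/
lemma step2 (M N : Matrix (Fin n) (Fin n) R) (α : Finset (Fin n)) :
    Matrix.det (Matrix.of fun i j : Fin n => if i ∈ α then N i j else M i j) =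
      ∑ β : Finset (Fin n),
        if h : α.card = β.card then
          (-1 : R) ^ ((∑ i ∈ α, ((i : ℕ) + 1)) + (∑ j ∈ β, ((j : ℕ) + 1))) *
          (M.submatrix
              (fun i : Fin (αᶜ.card) => ((αᶜ.orderIsoOfFin rfl i : Fin n)))
              (fun j : Fin (αᶜ.card) =>
                ((βᶜ.orderIsoOfFin
                  (by rw [Finset.card_compl, Finset.card_compl, h]) j : Fin n)))).det *
          (N.submatrix
              (fun i : Fin (α.card) => ((α.orderIsoOfFin rfl i : Fin n)))
              (fun j : Fin (α.card) => ((β.orderIsoOfFin h.symm j : Fin n)))).det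
        else 0 := by
  set k := α.card with hkdef
  set m := αᶜ.card with hmdef
  have hk : k + m = n := by
    rw [hkdef, hmdef]
    have := Finset.card_add_card_compl α
    rwa [Fintype.card_fin] at this
  have hα : α.card = k := rfl
  -- the sorting permutation
  have hbij : Function.Bijective (elimEmb hk α hα) :=
    (Finite.injective_iff_bijective).mp (elimEmb_injective hk α hα)
  set ρ : Equiv.Perm (Fin n) := Equiv.ofBijective _ hbij with hρdef
  have hρ : ∀ i, ρ i = elimEmb hk α hα i := fun i => rfl
  -- the sign of ρ
  have hsign : ((Equiv.Perm.sign ρ : ℤ) : R) =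
      (-1 : R) ^ ((∑ x ∈ α, (x : ℕ)) + ∑ j ∈ Finset.range k, j) := by
    have h1 : (1 : Matrix (Fin n) (Fin n) R).submatrix ρ id = uMat R hk α hα := by
      funext i j
      rw [Matrix.submatrix_apply, id_eq, uMat, Matrix.of_apply, Matrix.one_apply, hρ]
      exact if_congr (eq_comm) rfl rfl
    have h2 := Matrix.det_permute ρ (1 : Matrix (Fin n) (Fin n) R)
    rw [h1, uMat_det, Matrix.det_one, mul_one] at h2
    exact_mod_cast h2.symm
  -- row-permuted piecewise matrix agrees with Fmap of the sorted rows
  set x : Fin k → Fin n → R := fun a => N (α.orderEmbOfFin hα a) with hxdef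
  set y : Fin m → Fin n → R := fun b => M (αᶜ.orderEmbOfFin (ccompl hk hα) b) with hydef
  have hperm : (Matrix.of fun i j : Fin n => if i ∈ α then N i j else M i j).submatrix ρ id =
      Matrix.of fun i j : Fin n =>
        (Sum.elim x y (finSumFinEquiv.symm (Fin.cast hk.symm i))) j := by
    funext i j
    rw [Matrix.submatrix_apply, id_eq, Matrix.of_apply, Matrix.of_apply, hρ]
    unfold elimEmb
    rcases finSumFinEquiv.symm (Fin.cast hk.symm i) with a | a
    · rw [Sum.elim_inl, Sum.elim_inl, if_pos (Finset.orderEmbOfFin_mem α hα a)]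
    · rw [Sum.elim_inr, Sum.elim_inr,
        if_neg (Finset.mem_compl.mp (Finset.orderEmbOfFin_mem αᶜ (ccompl hk hα) a))]
  have hFG := congrFun (congrArg (fun f => f.toFun) (lap R hk)) (Sum.elim x y)
  have hF : Fmap R hk (Sum.elim x y) = Gmap R hk (Sum.elim x y) := hFG
  rw [Fmap_apply, Gmap_apply] at hF
  have hdetperm := Matrix.det_permute ρ
    (Matrix.of fun i j : Fin n => if i ∈ α then N i j else M i j)
  rw [hperm] at hdetperm
  -- so sign ρ * det A = Σ ...
  set s : R := (-1 : R) ^ ((∑ x ∈ α, (x : ℕ)) + ∑ j ∈ Finset.range k, j) with hsdef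
  have hss : s * s = 1 := by
    rw [hsdef, ← pow_add]
    exact Even.neg_one_pow ⟨_, rfl⟩
  have hmain : s * Matrix.det (Matrix.of fun i j : Fin n => if i ∈ α then N i j else M i j) =
      ∑ β : Finset (Fin n),
      (if h : β.card = k then
        ((-1 : R) ^ ((∑ x' ∈ β, (x' : ℕ)) + ∑ j ∈ Finset.range k, j)) *
          Matrix.det (Matrix.of fun i j : Fin k =>
            Sum.elim x y (Sum.inl i) (β.orderEmbOfFin h j)) *
          Matrix.det (Matrix.of fun i j : Fin m =>
            Sum.elim x y (Sum.inr i) (βᶜ.orderEmbOfFin (ccompl hk h) j))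
      else 0) := by
    rw [← hF, hdetperm, hsign]
  have hdet : Matrix.det (Matrix.of fun i j : Fin n => if i ∈ α then N i j else M i j) =
      s * ∑ β : Finset (Fin n),
      (if h : β.card = k then
        ((-1 : R) ^ ((∑ x' ∈ β, (x' : ℕ)) + ∑ j ∈ Finset.range k, j)) *
          Matrix.det (Matrix.of fun i j : Fin k =>
            Sum.elim x y (Sum.inl i) (β.orderEmbOfFin h j)) *
          Matrix.det (Matrix.of fun i j : Fin m =>
            Sum.elim x y (Sum.inr i) (βᶜ.orderEmbOfFin (ccompl hk h) j))
      else 0) := by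
    rw [← hmain, ← mul_assoc, hss, one_mul]
  rw [hdet, Finset.mul_sum]
  apply Finset.sum_congr rfl
  intro β _
  by_cases h : α.card = β.card
  · rw [dif_pos h, dif_pos (by rw [← h, hα] : β.card = k)]
    rw [hsdef]
    have hcoef := neg_one_pow_combine (R := R) (∑ j ∈ Finset.range k, j) k
      (∑ x' ∈ α, (x' : ℕ)) (∑ x' ∈ β, (x' : ℕ))
    have hsump : ∀ γ : Finset (Fin n), γ.card = k →
        (∑ i ∈ γ, ((i : ℕ) + 1)) = (∑ i ∈ γ, (i : ℕ)) + k := by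
      intro γ hγ
      rw [Finset.sum_add_distrib, Finset.sum_const, hγ, smul_eq_mul, mul_one]
    rw [hsump α hα, hsump β (by rw [← h, hα])]
    rw [← hcoef]
    have e1 : (Matrix.of fun i j : Fin k =>
        Sum.elim x y (Sum.inl i) (β.orderEmbOfFin (by rw [← h, hα] : β.card = k) j)) =
        (N.submatrix
          (fun i : Fin (α.card) => ((α.orderIsoOfFin rfl i : Fin n)))
          (fun j : Fin (α.card) => ((β.orderIsoOfFin h.symm j : Fin n)))) := by
      funext i j
      rw [Matrix.of_apply, Sum.elim_inl, hxdef, Matrix.submatrix_apply,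
        Finset.coe_orderIsoOfFin_apply, Finset.coe_orderIsoOfFin_apply]
    have e2 : (Matrix.of fun i j : Fin m =>
        Sum.elim x y (Sum.inr i) (βᶜ.orderEmbOfFin (ccompl hk (by rw [← h, hα] : β.card = k)) j)) =
        (M.submatrix
          (fun i : Fin (αᶜ.card) => ((αᶜ.orderIsoOfFin rfl i : Fin n)))
          (fun j : Fin (αᶜ.card) =>
            ((βᶜ.orderIsoOfFin
              (by rw [Finset.card_compl, Finset.card_compl, h]) j : Fin n)))) := by
      funext i j
      rw [Matrix.of_apply, Sum.elim_inr, hydef, Matrix.submatrix_apply,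
        Finset.coe_orderIsoOfFin_apply, Finset.coe_orderIsoOfFin_apply]
    rw [e1, e2]
    ring
  · rw [dif_neg h, dif_neg (fun hc : β.card = k => h (by rw [hα, ← hc])), mul_zero]


/-- The Marcus determinant formula for a sum of two matrices:
`det (M + N)` is the sum over all pairs of equal-size index sets `α, β` of
`(−1)^{s(α)+s(β)} · det M_α^β · det N_ᾱ^β̄`, where `M_α^β` deletes the rows `α` and
columns `β` and `N_ᾱ^β̄` keeps only the rows `α` and columns `β`; `s(α)` is the sum
of the (1-based) indices in `α`. -/
theorem stmt16 {R : Type} [CommRing R] {n : ℕ} (M N : Matrix (Fin n) (Fin n) R) :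
    (M + N).det =
      ∑ α : Finset (Fin n), ∑ β : Finset (Fin n),
        if h : α.card = β.card then
          (-1 : R) ^ ((∑ i ∈ α, ((i : ℕ) + 1)) + (∑ j ∈ β, ((j : ℕ) + 1))) *
          (M.submatrix
              (fun i : Fin (αᶜ.card) => ((αᶜ.orderIsoOfFin rfl i : Fin n)))
              (fun j : Fin (αᶜ.card) =>
                ((βᶜ.orderIsoOfFin
                  (by rw [Finset.card_compl, Finset.card_compl, h]) j : Fin n)))).det *
          (N.submatrix
              (fun i : Fin (α.card) => ((α.orderIsoOfFin rfl i : Fin n)))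
              (fun j : Fin (α.card) => ((β.orderIsoOfFin h.symm j : Fin n)))).det
        else 0 := by
  classical
  have hexp : (M + N).det =
      ∑ α : Finset (Fin n),
        Matrix.det (Matrix.of fun i j : Fin n => if i ∈ α then N i j else M i j) := by
    have h1 := (Matrix.detRowAlternating :
      ((Fin n → R) [⋀^Fin n]→ₗ[R] R)).toMultilinearMap.map_add_univ (fun i => M i) (fun i => N i)
    have h2 : (M + N).det = (Matrix.detRowAlternating :
        ((Fin n → R) [⋀^Fin n]→ₗ[R] R)).toMultilinearMap ((fun i => M i) + (fun i => N i)) := rfl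
    rw [h2, h1]
    have e : Finset (Fin n) ≃ Finset (Fin n) :=
      ⟨fun s => sᶜ, fun s => sᶜ, fun s => compl_compl s, fun s => compl_compl s⟩
    refine Fintype.sum_equiv
      (⟨fun s => sᶜ, fun s => sᶜ, fun s => compl_compl s, fun s => compl_compl s⟩ :
        Finset (Fin n) ≃ Finset (Fin n)) _ _ ?_
    intro s
    show (Matrix.detRowAlternating :
        ((Fin n → R) [⋀^Fin n]→ₗ[R] R)) (s.piecewise (fun i => M i) (fun i => N i)) = _
    have h3 : (s.piecewise (fun i => M i) (fun i => N i)) =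
        fun i => (Matrix.of fun i j : Fin n => if i ∈ sᶜ then N i j else M i j) i := by
      funext i j
      simp only [Finset.piecewise, Matrix.of_apply, Finset.mem_compl]
      by_cases hi : i ∈ s
      · simp [hi]
      · simp [hi]
    rw [h3]
    rfl
  rw [hexp]
  exact Finset.sum_congr rfl fun α _ => step2 M N α
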